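/- arXiv:2405.04266 — 2 statements merged into one kernel-verified Lean document; each statement's English description precedes it below -/
import Mathlib

section
/- Let v ∈ V and let t > max_{w ∈ V} ℓ_max(w) be a round such that t is not a platinum round for v and η_t(v) ≤ 0.0001. If d_t(v) > 0.01 and d_t^L(v) < 0.01·d_t(v), then conditioned on any such history F_t, with probability at least 0.97 we have d_{t+1}(v) < 0.6·d_t(v) or round t+1 is a platinum round for v. -/
set_option linter.unusedSectionVars false
set_option maxHeartbeats 1000000


open MeasureTheory ProbabilityTheory Real
open scoped ENNReal Classical

noncomputable section

namespace BeepMIS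

variable {V : Type} [Fintype V] [DecidableEq V]

/-- Beeping probability of a vertex, as a function of the current level configuration. -/
def beepP (lmax : V → ℤ) (ℓ : V → ℤ) (v : V) : ℝ :=
  if ℓ v ≤ 0 then 1 else if ℓ v = lmax v then 0 else (2 : ℝ) ^ (-(ℓ v))

/-- The level-update rule of the algorithm, given the current levels `ℓ` and
the set `b` of vertices that beeped in the current round. -/
def updateLevel (G : SimpleGraph V) (lmax : V → ℤ) (ℓ : V → ℤ) (b : V → Prop) (v : V) : ℤ :=
  if ∃ u, G.Adj v u ∧ b u then min (ℓ v + 1) (lmax v)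
  else if b v then -lmax v
  else max (ℓ v - 1) 1

/-- The level process, driven by the i.i.d. uniform random variables `U`.
Rounds are indexed from `1`; `level … 1 = ℓ₁` is the (arbitrary) initial configuration,
and in round `t ≥ 1` vertex `v` beeps iff `U t v ω < beepP lmax (level … t) v`. -/
def level (G : SimpleGraph V) (lmax : V → ℤ) (ℓ₁ : V → ℤ) {Ω : Type}
    (U : ℕ → V → Ω → ℝ) (ω : Ω) : ℕ → V → ℤ
  | 0 => ℓ₁
  | t + 1 =>
    if t = 0 then ℓ₁
    else
      updateLevel G lmax (level G lmax ℓ₁ U ω t)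
        (fun v => U t v ω < beepP lmax (level G lmax ℓ₁ U ω t) v)

/-- `μ_t(v) = min_{u ∈ N(v)} ℓ_t(u)/ℓ_max(u)`, with value `1` if `N(v) = ∅`. -/
def muVal (G : SimpleGraph V) [DecidableRel G.Adj] (lmax : V → ℤ) (ℓ : V → ℤ) (v : V) : ℝ :=
  if h : (G.neighborFinset v).Nonempty then
    (G.neighborFinset v).inf' h (fun u => (ℓ u : ℝ) / (lmax u : ℝ))
  else 1

/-- The set `I_t` of MIS vertices. -/
def misSet (G : SimpleGraph V) [DecidableRel G.Adj] (lmax : V → ℤ) (ℓ : V → ℤ) : Set V :=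
  {v | ℓ v = -lmax v ∧ muVal G lmax ℓ v = 1}

/-- The set `S_t = I_t ∪ N(I_t)` of stable vertices. -/
def stableSet (G : SimpleGraph V) [DecidableRel G.Adj] (lmax : V → ℤ) (ℓ : V → ℤ) : Set V :=
  misSet G lmax ℓ ∪ {v | ∃ u ∈ misSet G lmax ℓ, G.Adj u v}

/-- `d_t(v)`: expected number of beeping neighbors of `v`. -/
def dVal (G : SimpleGraph V) [DecidableRel G.Adj] (lmax : V → ℤ) (ℓ : V → ℤ) (v : V) : ℝ :=
  ∑ u ∈ G.neighborFinset v, beepP lmax ℓ u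

/-- Round is platinum for `v`: some vertex of `N⁺(v)` is prominent (has level `≤ 0`). -/
def Platinum (G : SimpleGraph V) (ℓ : V → ℤ) (v : V) : Prop :=
  ℓ v ≤ 0 ∨ ∃ u, G.Adj v u ∧ ℓ u ≤ 0

/-- `η_t(v) = Σ_{u ∈ N(v)∖S_t} 2^{−ℓ_max(u)}`. -/
def eta (G : SimpleGraph V) [DecidableRel G.Adj] (lmax : V → ℤ) (ℓ : V → ℤ) (v : V) : ℝ :=
  ∑ u ∈ G.neighborFinset v,
    if u ∈ stableSet G lmax ℓ then 0 else (2 : ℝ) ^ (-(lmax u))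

/-- `η'_t(v) = Σ_{u ∈ N(v)∖S_t, ℓ_max(u) > ℓ_max(v)} 2^{−ℓ_max(v)}`. -/
def eta' (G : SimpleGraph V) [DecidableRel G.Adj] (lmax : V → ℤ) (ℓ : V → ℤ) (v : V) : ℝ :=
  ∑ u ∈ G.neighborFinset v,
    if u ∉ stableSet G lmax ℓ ∧ lmax v < lmax u then (2 : ℝ) ^ (-(lmax v)) else 0

/-- A vertex is light if `μ_t(v) > 0` and (`d_t(v) ≤ 10` or `ℓ_t(v) ≤ 0`). -/
def Light (G : SimpleGraph V) [DecidableRel G.Adj] (lmax : V → ℤ) (ℓ : V → ℤ) (v : V) : Prop :=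
  0 < muVal G lmax ℓ v ∧ (dVal G lmax ℓ v ≤ 10 ∨ ℓ v ≤ 0)

/-- `d_t^L(v)`: expected number of beeping light neighbors of `v`. -/
def dLVal (G : SimpleGraph V) [DecidableRel G.Adj] (lmax : V → ℤ) (ℓ : V → ℤ) (v : V) : ℝ :=
  ∑ u ∈ G.neighborFinset v, if Light G lmax ℓ u then beepP lmax ℓ u else 0

/-- Round is golden for `v`. -/
def Golden (G : SimpleGraph V) [DecidableRel G.Adj] (lmax : V → ℤ) (ℓ : V → ℤ) (v : V) : Prop :=
  (ℓ v ≤ 1 ∧ dVal G lmax ℓ v ≤ 0.02) ∨ 0.001 < dLVal G lmax ℓ v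

/-- The natural filtration `F_t`: the σ-algebra generated by the driving randomness
of the rounds before `t`. -/
def Ft {Ω : Type} [MeasurableSpace Ω] (U : ℕ → V → Ω → ℝ) (t : ℕ) : MeasurableSpace Ω :=
  MeasurableSpace.comap (fun ω => fun p : Fin t × V => U p.1 p.2 ω) inferInstance

/-- `I` is a maximal independent set of `G`. -/
def IsMIS (G : SimpleGraph V) (I : Set V) : Prop :=
  (∀ u ∈ I, ∀ v ∈ I, ¬ G.Adj u v) ∧ ∀ v, v ∉ I → ∃ u ∈ I, G.Adj u v



-- ========== auxiliary lemmas ==========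

section Aux
variable {V : Type} [Fintype V] [DecidableEq V]

lemma two_zpow_pos' (n : ℤ) : (0:ℝ) < 2 ^ n := zpow_pos (by norm_num) n

lemma two_zpow_mono' {m n : ℤ} (h : m ≤ n) : (2:ℝ) ^ m ≤ 2 ^ n :=
  zpow_le_zpow_right₀ (by norm_num) h

lemma two_zpow_pred' (n : ℤ) : (2:ℝ) ^ (-(n-1)) = 2 * 2 ^ (-n) := by
  rw [show -(n-1) = -n + 1 by ring, zpow_add₀ (by norm_num : (2:ℝ) ≠ 0)]
  norm_num [mul_comm]

lemma beepP_nonneg (lmax ℓ : V → ℤ) (v : V) : 0 ≤ beepP lmax ℓ v := by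
  unfold beepP; split_ifs <;> positivity

lemma beepP_le_one (lmax ℓ : V → ℤ) (v : V) : beepP lmax ℓ v ≤ 1 := by
  unfold beepP
  split_ifs with h h2
  · norm_num
  · norm_num
  · have := two_zpow_mono' (show -(ℓ v) ≤ 0 by omega)
    simpa using this

lemma beepP_le_zpow (lmax ℓ : V → ℤ) (v : V) (h : 1 ≤ ℓ v) :
    beepP lmax ℓ v ≤ (2:ℝ) ^ (-(ℓ v)) := by
  unfold beepP; split_ifs <;> first | omega | exact (two_zpow_pos' _).le | exact le_refl _

lemma neighbor_bound (G : SimpleGraph V) [DecidableRel G.Adj] (lmax : V → ℤ)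
    (h1 : ∀ v, 1 ≤ lmax v) (c : V → ℤ) (hc : ∀ w, c w ≤ lmax w) (b : V → Prop)
    (hsure : ∀ w, c w ≤ 0 → b w)
    (u : V) (hu1 : 1 ≤ c u)
    (hu2 : ¬ updateLevel G lmax c b u ≤ 0) :
    beepP lmax (updateLevel G lmax c b) u ≤
      (1/2) * beepP lmax c u
      + (if Light G lmax c u then 2 * beepP lmax c u else 0)
      + (if u ∈ stableSet G lmax c then 0 else 2 * (2:ℝ) ^ (-(lmax u)))
      + (if (¬ Light G lmax c u ∧ 0 < muVal G lmax c u) ∧ (∀ w, G.Adj u w → ¬ b w)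
         then 2 * beepP lmax c u else 0) := by
  classical
  have hp0 := beepP_nonneg lmax c u
  have hz : (0:ℝ) < 2 ^ (-(lmax u)) := two_zpow_pos' _
  have t2 : (0:ℝ) ≤ (if Light G lmax c u then 2 * beepP lmax c u else 0) := by
    split_ifs <;> linarith
  have t3 : (0:ℝ) ≤ (if u ∈ stableSet G lmax c then 0 else 2 * (2:ℝ) ^ (-(lmax u))) := by
    split_ifs <;> linarith
  have t4 : (0:ℝ) ≤ (if (¬ Light G lmax c u ∧ 0 < muVal G lmax c u) ∧
      (∀ w, G.Adj u w → ¬ b w) then 2 * beepP lmax c u else 0) := by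
    split_ifs <;> linarith
  by_cases hbeep : ∃ w, G.Adj u w ∧ b w
  · have hcu' : updateLevel G lmax c b u = min (c u + 1) (lmax u) := by
      unfold updateLevel; rw [if_pos hbeep]
    have key : beepP lmax (updateLevel G lmax c b) u ≤ (1/2) * beepP lmax c u := by
      by_cases hml : c u = lmax u
      · have e1 : updateLevel G lmax c b u = lmax u := by rw [hcu']; omega
        have e2 : beepP lmax (updateLevel G lmax c b) u = 0 := by
          unfold beepP; rw [e1, if_neg (by have := h1 u; omega), if_pos rfl]
        rw [e2]; linarith
      · have hlt : c u < lmax u := lt_of_le_of_ne (hc u) hml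
        have e1 : updateLevel G lmax c b u = c u + 1 := by rw [hcu']; omega
        have e2 : beepP lmax c u = 2 ^ (-(c u)) := by
          unfold beepP; rw [if_neg (by omega), if_neg hml]
        have e3 : beepP lmax (updateLevel G lmax c b) u ≤ 2 ^ (-(c u + 1)) := by
          have := beepP_le_zpow lmax (updateLevel G lmax c b) u (by omega)
          rwa [e1] at this
        have e4 : (2:ℝ) ^ (-(c u + 1)) = (1/2) * 2 ^ (-(c u)) := by
          rw [show -(c u + 1) = -(c u) - 1 by ring, zpow_sub₀ (by norm_num : (2:ℝ) ≠ 0)]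
          norm_num; ring
        rw [e2]; rw [e4] at e3; linarith
    linarith
  · have hnb : ∀ w, G.Adj u w → ¬ b w := by push_neg at hbeep; exact hbeep
    have hbu : ¬ b u := by
      intro h
      have e1 : updateLevel G lmax c b u = -lmax u := by
        unfold updateLevel; rw [if_neg hbeep, if_pos h]
      exact hu2 (by rw [e1]; have := h1 u; omega)
    have hcu' : updateLevel G lmax c b u = max (c u - 1) 1 := by
      unfold updateLevel; rw [if_neg hbeep, if_neg hbu]
    have hc'1 : 1 ≤ updateLevel G lmax c b u := by rw [hcu']; omega
    have hnstab : u ∉ stableSet G lmax c := by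
      intro hs
      rcases hs with hmis | ⟨w, hwmis, hadj⟩
      · have h' := hmis.1; have := h1 u; omega
      · exact hnb w hadj.symm (hsure w (by have := hwmis.1; have := h1 w; omega))
    have hmu : 0 < muVal G lmax c u := by
      by_contra hmu
      push_neg at hmu
      unfold muVal at hmu
      split_ifs at hmu with hne
      · obtain ⟨w, hw, hweq⟩ := Finset.exists_mem_eq_inf' hne
          (fun w => (c w : ℝ) / (lmax w : ℝ))
        rw [hweq] at hmu
        have hlw : (0:ℝ) < (lmax w : ℝ) := by
          exact_mod_cast (by have := h1 w; omega : (0:ℤ) < lmax w)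
        have hcw : c w ≤ 0 := by
          by_contra hcw
          push_neg at hcw
          have h0 : (0:ℝ) < (c w : ℝ) := by exact_mod_cast hcw
          have := div_pos h0 hlw
          linarith
        exact hnb w (by rwa [SimpleGraph.mem_neighborFinset] at hw) (hsure w hcw)
      · linarith
    by_cases hml : c u = lmax u
    · have key : beepP lmax (updateLevel G lmax c b) u ≤ 2 * 2 ^ (-(lmax u)) :=
        calc beepP lmax (updateLevel G lmax c b) u
            ≤ 2 ^ (-(updateLevel G lmax c b u)) := beepP_le_zpow _ _ _ hc'1
          _ ≤ 2 ^ (-(lmax u - 1)) := two_zpow_mono' (by rw [hcu']; omega)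
          _ = 2 * 2 ^ (-(lmax u)) := two_zpow_pred' _
      rw [if_neg hnstab]; linarith
    · have hlt : c u < lmax u := lt_of_le_of_ne (hc u) hml
      have e2 : beepP lmax c u = 2 ^ (-(c u)) := by
        unfold beepP; rw [if_neg (by omega), if_neg hml]
      have key : beepP lmax (updateLevel G lmax c b) u ≤ 2 * beepP lmax c u := by
        calc beepP lmax (updateLevel G lmax c b) u
            ≤ 2 ^ (-(updateLevel G lmax c b u)) := beepP_le_zpow _ _ _ hc'1
          _ ≤ 2 ^ (-(c u - 1)) := two_zpow_mono' (by rw [hcu']; omega)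
          _ = 2 * 2 ^ (-(c u)) := two_zpow_pred' _
          _ = 2 * beepP lmax c u := by rw [e2]
      by_cases hlight : Light G lmax c u
      · rw [if_pos hlight]; linarith
      · have hcond : (¬ Light G lmax c u ∧ 0 < muVal G lmax c u) ∧
            (∀ w, G.Adj u w → ¬ b w) := ⟨⟨hlight, hmu⟩, hnb⟩
        rw [if_pos hcond]; linarith

lemma det_step (G : SimpleGraph V) [DecidableRel G.Adj] (lmax : V → ℤ)
    (h1 : ∀ v, 1 ≤ lmax v) (c : V → ℤ) (hc : ∀ w, c w ≤ lmax w) (b : V → Prop) (v : V)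
    (hplat : ¬ Platinum G c v)
    (heta : eta G lmax c v ≤ 0.0001)
    (hd : 0.01 < dVal G lmax c v)
    (hdL : dLVal G lmax c v < 0.01 * dVal G lmax c v)
    (hsure : ∀ w, c w ≤ 0 → b w)
    (hB : ∑ u ∈ G.neighborFinset v,
        (if (¬ Light G lmax c u ∧ 0 < muVal G lmax c u) ∧ (∀ w, G.Adj u w → ¬ b w)
         then 2 * beepP lmax c u else 0) ≤ 0.05 * dVal G lmax c v) :
    dVal G lmax (updateLevel G lmax c b) v < 0.6 * dVal G lmax c v ∨
      Platinum G (updateLevel G lmax c b) v := by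
  classical
  by_cases hP : Platinum G (updateLevel G lmax c b) v
  · exact Or.inr hP
  left
  unfold Platinum at hplat hP
  push_neg at hplat hP
  have key : ∀ u ∈ G.neighborFinset v,
      beepP lmax (updateLevel G lmax c b) u ≤
        (1/2) * beepP lmax c u
        + (if Light G lmax c u then 2 * beepP lmax c u else 0)
        + (if u ∈ stableSet G lmax c then 0 else 2 * (2:ℝ) ^ (-(lmax u)))
        + (if (¬ Light G lmax c u ∧ 0 < muVal G lmax c u) ∧ (∀ w, G.Adj u w → ¬ b w)
           then 2 * beepP lmax c u else 0) := by
    intro u hu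
    have hadj : G.Adj v u := by rwa [SimpleGraph.mem_neighborFinset] at hu
    exact neighbor_bound G lmax h1 c hc b hsure u (by have := hplat.2 u hadj; omega)
      (by have := hP.2 u hadj; omega)
  have hsum : dVal G lmax (updateLevel G lmax c b) v ≤
      (1/2) * dVal G lmax c v + 2 * dLVal G lmax c v + 2 * eta G lmax c v
      + ∑ u ∈ G.neighborFinset v,
        (if (¬ Light G lmax c u ∧ 0 < muVal G lmax c u) ∧ (∀ w, G.Adj u w → ¬ b w)
         then 2 * beepP lmax c u else 0) := by
    have h2 : ∑ u ∈ G.neighborFinset v, (if Light G lmax c u then 2 * beepP lmax c u else 0)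
        = 2 * dLVal G lmax c v := by
      unfold dLVal
      rw [Finset.mul_sum]
      exact Finset.sum_congr rfl (fun u _ => by split_ifs <;> ring)
    have h3 : ∑ u ∈ G.neighborFinset v,
        (if u ∈ stableSet G lmax c then 0 else 2 * (2:ℝ) ^ (-(lmax u)))
        = 2 * eta G lmax c v := by
      unfold eta
      rw [Finset.mul_sum]
      exact Finset.sum_congr rfl (fun u _ => by split_ifs <;> ring)
    calc dVal G lmax (updateLevel G lmax c b) v
        ≤ ∑ u ∈ G.neighborFinset v,
          ((1/2) * beepP lmax c u
            + (if Light G lmax c u then 2 * beepP lmax c u else 0)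
            + (if u ∈ stableSet G lmax c then 0 else 2 * (2:ℝ) ^ (-(lmax u)))
            + (if (¬ Light G lmax c u ∧ 0 < muVal G lmax c u) ∧ (∀ w, G.Adj u w → ¬ b w)
               then 2 * beepP lmax c u else 0)) := Finset.sum_le_sum key
      _ = (1/2) * dVal G lmax c v + 2 * dLVal G lmax c v + 2 * eta G lmax c v
          + ∑ u ∈ G.neighborFinset v,
            (if (¬ Light G lmax c u ∧ 0 < muVal G lmax c u) ∧ (∀ w, G.Adj u w → ¬ b w)
             then 2 * beepP lmax c u else 0) := by
          rw [Finset.sum_add_distrib, Finset.sum_add_distrib, Finset.sum_add_distrib,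
            h2, h3, ← Finset.mul_sum]
          rfl
  linarith

lemma level_range (G : SimpleGraph V) (lmax : V → ℤ) (h1 : ∀ v, 1 ≤ lmax v)
    (ℓ₁ : V → ℤ) (hinit : ∀ v, -lmax v ≤ ℓ₁ v ∧ ℓ₁ v ≤ lmax v)
    {Ω : Type} (U : ℕ → V → Ω → ℝ) (ω : Ω) :
    ∀ s v, -lmax v ≤ level G lmax ℓ₁ U ω s v ∧ level G lmax ℓ₁ U ω s v ≤ lmax v := by
  intro s
  induction s with
  | zero => exact hinit
  | succ n ih =>
    intro v
    by_cases hn0 : n = 0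
    · subst hn0; simpa [level] using hinit v
    · have heq : level G lmax ℓ₁ U ω (n+1) v = updateLevel G lmax (level G lmax ℓ₁ U ω n)
          (fun w => U n w ω < beepP lmax (level G lmax ℓ₁ U ω n) w) v := by
        simp [level, hn0]
      rw [heq]; unfold updateLevel
      have h2 := ih v; have h3 := h1 v
      split_ifs <;> omega

lemma measurable_U_Ft {Ω : Type} [MeasurableSpace Ω] (U : ℕ → V → Ω → ℝ) (t s : ℕ)
    (hs : s < t) (w : V) : Measurable[Ft U t] (U s w) := by
  have h : U s w = (fun x : Fin t × V → ℝ => x (⟨s, hs⟩, w)) ∘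
      (fun ω => fun p : Fin t × V => U p.1 p.2 ω) := rfl
  rw [h]
  exact (measurable_pi_apply _).comp (fun s hs => ⟨s, hs, rfl⟩)

lemma measurable_level_Ft (G : SimpleGraph V) (lmax ℓ₁ : V → ℤ)
    {Ω : Type} [MeasurableSpace Ω] (U : ℕ → V → Ω → ℝ) (t : ℕ) :
    ∀ s, s ≤ t → ∀ v, Measurable[Ft U t] (fun ω => level G lmax ℓ₁ U ω s v) := by
  intro s
  induction s with
  | zero => exact fun _ v => measurable_const
  | succ n ih =>
    intro hn v
    by_cases hn0 : n = 0
    · subst hn0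
      have h : (fun ω => level G lmax ℓ₁ U ω 1 v) = fun _ => ℓ₁ v := by
        funext ω; simp [level]
      rw [h]; exact measurable_const
    · have hlt : n < t := by omega
      have heq : (fun ω => level G lmax ℓ₁ U ω (n+1) v) = fun ω =>
          if ∃ u, G.Adj v u ∧ U n u ω < beepP lmax (level G lmax ℓ₁ U ω n) u
          then min (level G lmax ℓ₁ U ω n v + 1) (lmax v)
          else if U n v ω < beepP lmax (level G lmax ℓ₁ U ω n) v then -lmax v
          else max (level G lmax ℓ₁ U ω n v - 1) 1 := by
        funext ω; simp [level, hn0, updateLevel]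
      have hlev : ∀ w, Measurable[Ft U t] (fun ω => level G lmax ℓ₁ U ω n w) :=
        fun w => ih (by omega) w
      have hbp : ∀ w, Measurable[Ft U t]
          (fun ω => beepP lmax (level G lmax ℓ₁ U ω n) w) := by
        intro w
        have h : (fun ω => beepP lmax (level G lmax ℓ₁ U ω n) w) =
            (fun z : ℤ => if z ≤ 0 then (1:ℝ) else if z = lmax w then 0 else 2 ^ (-z)) ∘
              (fun ω => level G lmax ℓ₁ U ω n w) := rfl
        rw [h]; exact measurable_from_top.comp (hlev w)
      rw [heq]
      refine Measurable.ite ?_ ?_ (Measurable.ite ?_ measurable_const ?_)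
      · have h : {ω | ∃ u, G.Adj v u ∧ U n u ω < beepP lmax (level G lmax ℓ₁ U ω n) u} =
            ⋃ u, {ω | G.Adj v u ∧ U n u ω < beepP lmax (level G lmax ℓ₁ U ω n) u} := by
          ext ω; simp
        rw [h]
        refine MeasurableSet.iUnion fun u => ?_
        by_cases ha : G.Adj v u
        · simp only [ha, true_and]
          exact measurableSet_lt (measurable_U_Ft U t n hlt u) (hbp u)
        · simp [ha]
      · exact (measurable_from_top (f := fun z : ℤ => min (z+1) (lmax v))).comp (hlev v)
      · exact measurableSet_lt (measurable_U_Ft U t n hlt v) (hbp v)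
      · exact (measurable_from_top (f := fun z : ℤ => max (z-1) 1)).comp (hlev v)

lemma exp_neg_ten_le : Real.exp (-10) ≤ 0.00075 := by
  have h1 : (2.7:ℝ)^(10:ℕ) ≤ (Real.exp 1)^(10:ℕ) :=
    pow_le_pow_left₀ (by norm_num) (le_of_lt (by linarith [Real.exp_one_gt_d9])) 10
  rw [Real.exp_one_pow] at h1
  have h2 : (1334:ℝ) ≤ Real.exp 10 := by
    calc (1334:ℝ) ≤ (2.7:ℝ)^(10:ℕ) := by norm_num
      _ ≤ Real.exp (10:ℕ) := h1
      _ = Real.exp 10 := by norm_num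
  have h3 : Real.exp (-10) * Real.exp 10 = 1 := by
    rw [← Real.exp_add]; norm_num
  nlinarith [Real.exp_pos (-10)]

lemma prob_nobeep (G : SimpleGraph V) [DecidableRel G.Adj]
    (lmax : V → ℤ) {Ω : Type} [MeasurableSpace Ω] (μ : Measure Ω) [IsProbabilityMeasure μ]
    (U : ℕ → V → Ω → ℝ) (hU : ∀ t v, Measurable (U t v))
    (hIndep : iIndepFun (fun p : ℕ × V => fun ω => U p.1 p.2 ω) μ)
    (hmap : ∀ t v, μ.map (U t v) = volume.restrict (Set.Ico (0:ℝ) 1))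
    (c : V → ℤ) (t : ℕ) (u : V) (hd : 10 < dVal G lmax c u) :
    μ {ω | ∀ w, G.Adj u w → ¬ U t w ω < beepP lmax c w}
      ≤ ENNReal.ofReal (Real.exp (-10)) := by
  classical
  have hp0 : ∀ w, 0 ≤ beepP lmax c w := beepP_nonneg lmax c
  have hp1 : ∀ w, beepP lmax c w ≤ 1 := beepP_le_one lmax c
  have hset : {ω | ∀ w, G.Adj u w → ¬ U t w ω < beepP lmax c w}
      = ⋂ i ∈ (G.neighborFinset u).image (fun w => ((t, w) : ℕ × V)),
          {ω | beepP lmax c i.2 ≤ U i.1 i.2 ω} := by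
    ext ω
    simp only [Set.mem_iInter, Finset.mem_image, SimpleGraph.mem_neighborFinset,
      Set.mem_setOf_eq, not_lt]
    constructor
    · rintro h i ⟨w, hw, rfl⟩; exact h w hw
    · intro h w hw; exact h (t, w) ⟨w, hw, rfl⟩
  rw [hset, hIndep.meas_biInter (s := fun i : ℕ × V => {ω | beepP lmax c i.2 ≤ U i.1 i.2 ω})
    (fun i _ => ⟨Set.Ici (beepP lmax c i.2), measurableSet_Ici, rfl⟩)]
  rw [Finset.prod_image (fun a _ b _ h => by simpa using h)]
  have hμw : ∀ w : V, μ {ω | beepP lmax c ((t,w) : ℕ × V).2 ≤ U ((t,w) : ℕ × V).1 ((t,w):ℕ × V).2 ω}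
      = ENNReal.ofReal (1 - beepP lmax c w) := by
    intro w
    have h1 : {ω | beepP lmax c w ≤ U t w ω} = U t w ⁻¹' Set.Ici (beepP lmax c w) := rfl
    show μ {ω | beepP lmax c w ≤ U t w ω} = _
    rw [h1, ← Measure.map_apply (hU t w) measurableSet_Ici, hmap t w,
      Measure.restrict_apply measurableSet_Ici]
    have h2 : Set.Ici (beepP lmax c w) ∩ Set.Ico 0 1 = Set.Ico (beepP lmax c w) 1 := by
      rw [Set.inter_comm, Set.Ico_inter_Ici, sup_eq_right.mpr (hp0 w)]
    rw [h2, Real.volume_Ico]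
  rw [Finset.prod_congr rfl (fun w _ => hμw w)]
  rw [← ENNReal.ofReal_prod_of_nonneg (fun w _ => by linarith [hp1 w])]
  apply ENNReal.ofReal_le_ofReal
  calc ∏ w ∈ G.neighborFinset u, (1 - beepP lmax c w)
      ≤ ∏ w ∈ G.neighborFinset u, Real.exp (-(beepP lmax c w)) := by
        refine Finset.prod_le_prod (fun w _ => by linarith [hp1 w])
          (fun w _ => by linarith [Real.add_one_le_exp (-(beepP lmax c w))])
    _ = Real.exp (-(dVal G lmax c u)) := by
        rw [← Real.exp_sum]
        congr 1
        rw [dVal, ← Finset.sum_neg_distrib]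
    _ ≤ Real.exp (-10) := Real.exp_le_exp.mpr (by linarith)

lemma prob_bad (G : SimpleGraph V) [DecidableRel G.Adj]
    (lmax : V → ℤ) {Ω : Type} [MeasurableSpace Ω] (μ : Measure Ω) [IsProbabilityMeasure μ]
    (U : ℕ → V → Ω → ℝ) (hU : ∀ t v, Measurable (U t v))
    (hIndep : iIndepFun (fun p : ℕ × V => fun ω => U p.1 p.2 ω) μ)
    (hmap : ∀ t v, μ.map (U t v) = volume.restrict (Set.Ico (0:ℝ) 1))
    (c : V → ℤ) (t : ℕ) (v : V) (hd : 0.01 < dVal G lmax c v) :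
    μ {ω | 0.05 * dVal G lmax c v < ∑ u ∈ G.neighborFinset v,
        (if (¬ Light G lmax c u ∧ 0 < muVal G lmax c u) ∧
            (∀ w, G.Adj u w → ¬ U t w ω < beepP lmax c w)
         then 2 * beepP lmax c u else 0)} ≤ ENNReal.ofReal 0.03 := by
  classical
  have hp0 : ∀ w, 0 ≤ beepP lmax c w := beepP_nonneg lmax c
  have hNBmeas : ∀ u : V, MeasurableSet {ω | ∀ w, G.Adj u w → ¬ U t w ω < beepP lmax c w} := by
    intro u
    have h : {ω | ∀ w, G.Adj u w → ¬ U t w ω < beepP lmax c w}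
        = ⋂ w, {ω | G.Adj u w → ¬ U t w ω < beepP lmax c w} := by ext; simp
    rw [h]
    refine MeasurableSet.iInter fun w => ?_
    by_cases ha : G.Adj u w
    · simp only [ha, true_implies, not_lt]
      exact measurableSet_le measurable_const (hU t w)
    · simp [ha]
  set g : Ω → ℝ≥0∞ := fun ω => ∑ u ∈ G.neighborFinset v,
    (if (¬ Light G lmax c u ∧ 0 < muVal G lmax c u) then
      Set.indicator {ω' | ∀ w, G.Adj u w → ¬ U t w ω' < beepP lmax c w}
        (fun _ => ENNReal.ofReal (2 * beepP lmax c u)) ω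
    else 0) with hg
  have hterm_meas : ∀ u : V, Measurable (fun ω =>
      (if (¬ Light G lmax c u ∧ 0 < muVal G lmax c u) then
        Set.indicator {ω' | ∀ w, G.Adj u w → ¬ U t w ω' < beepP lmax c w}
          (fun _ => ENNReal.ofReal (2 * beepP lmax c u)) ω
      else 0)) := by
    intro u
    split_ifs with hA
    · exact measurable_const.indicator (hNBmeas u)
    · exact measurable_const
  have hgmeas : Measurable g := by
    rw [hg]; exact Finset.measurable_sum _ (fun u _ => hterm_meas u)
  have hsub : {ω | 0.05 * dVal G lmax c v < ∑ u ∈ G.neighborFinset v,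
        (if (¬ Light G lmax c u ∧ 0 < muVal G lmax c u) ∧
            (∀ w, G.Adj u w → ¬ U t w ω < beepP lmax c w)
         then 2 * beepP lmax c u else 0)}
      ⊆ {ω | ENNReal.ofReal (0.05 * dVal G lmax c v) ≤ g ω} := by
    intro ω hω
    rw [Set.mem_setOf_eq] at hω ⊢
    have hfg : ENNReal.ofReal (∑ u ∈ G.neighborFinset v,
        (if (¬ Light G lmax c u ∧ 0 < muVal G lmax c u) ∧
            (∀ w, G.Adj u w → ¬ U t w ω < beepP lmax c w)
         then 2 * beepP lmax c u else 0)) ≤ g ω := by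
      rw [ENNReal.ofReal_sum_of_nonneg (fun u _ => by split_ifs <;> [linarith [hp0 u]; rfl]), hg]
      refine Finset.sum_le_sum fun u _ => ?_
      by_cases hA : (¬ Light G lmax c u ∧ 0 < muVal G lmax c u)
      · by_cases hB : (∀ w, G.Adj u w → ¬ U t w ω < beepP lmax c w)
        · have hmem : ω ∈ {ω' | ∀ w, G.Adj u w → ¬ U t w ω' < beepP lmax c w} := hB
          rw [if_pos ⟨hA, hB⟩, if_pos hA, Set.indicator_of_mem hmem]
        · rw [if_neg (by tauto), if_pos hA]
          simpa using zero_le _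
      · rw [if_neg (by tauto), if_neg hA]
        simp
    exact le_trans (ENNReal.ofReal_le_ofReal hω.le) hfg
  have hheavy : ∀ u : V, (¬ Light G lmax c u ∧ 0 < muVal G lmax c u) → 10 < dVal G lmax c u := by
    intro u hA
    by_contra h
    push_neg at h
    exact hA.1 ⟨hA.2, Or.inl h⟩
  have hint : ∫⁻ ω, g ω ∂μ ≤ ENNReal.ofReal (Real.exp (-10) * (2 * dVal G lmax c v)) := by
    rw [hg, lintegral_finset_sum' _ (fun u _ => (hterm_meas u).aemeasurable)]
    have hone : ∀ u ∈ G.neighborFinset v, (∫⁻ ω,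
        (if (¬ Light G lmax c u ∧ 0 < muVal G lmax c u) then
          Set.indicator {ω' | ∀ w, G.Adj u w → ¬ U t w ω' < beepP lmax c w}
            (fun _ => ENNReal.ofReal (2 * beepP lmax c u)) ω
        else 0) ∂μ)
        ≤ ENNReal.ofReal (Real.exp (-10)) * ENNReal.ofReal (2 * beepP lmax c u) := by
      intro u _
      split_ifs with hA
      · rw [lintegral_indicator (hNBmeas u), setLIntegral_const]
        rw [mul_comm (ENNReal.ofReal (2 * beepP lmax c u))]
        exact mul_le_mul_left (prob_nobeep G lmax μ U hU hIndep hmap c t u (hheavy u hA)) _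
      · simp
    calc ∑ u ∈ G.neighborFinset v, (∫⁻ ω,
          (if (¬ Light G lmax c u ∧ 0 < muVal G lmax c u) then
            Set.indicator {ω' | ∀ w, G.Adj u w → ¬ U t w ω' < beepP lmax c w}
              (fun _ => ENNReal.ofReal (2 * beepP lmax c u)) ω
          else 0) ∂μ)
        ≤ ∑ u ∈ G.neighborFinset v,
            ENNReal.ofReal (Real.exp (-10)) * ENNReal.ofReal (2 * beepP lmax c u) :=
          Finset.sum_le_sum hone
      _ = ENNReal.ofReal (Real.exp (-10)) *
            ∑ u ∈ G.neighborFinset v, ENNReal.ofReal (2 * beepP lmax c u) := by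
          rw [Finset.mul_sum]
      _ = ENNReal.ofReal (Real.exp (-10)) *
            ENNReal.ofReal (∑ u ∈ G.neighborFinset v, 2 * beepP lmax c u) := by
          rw [ENNReal.ofReal_sum_of_nonneg (fun u _ => by linarith [hp0 u])]
      _ = ENNReal.ofReal (Real.exp (-10) * (2 * dVal G lmax c v)) := by
          rw [← ENNReal.ofReal_mul (Real.exp_pos (-10)).le]
          congr 2
          rw [dVal, Finset.mul_sum]
  have hmarkov := mul_meas_ge_le_lintegral₀ (μ := μ) hgmeas.aemeasurable
    (ENNReal.ofReal (0.05 * dVal G lmax c v))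
  have hchain : ENNReal.ofReal (0.05 * dVal G lmax c v) *
      μ {ω | ENNReal.ofReal (0.05 * dVal G lmax c v) ≤ g ω}
      ≤ ENNReal.ofReal 0.03 * ENNReal.ofReal (0.05 * dVal G lmax c v) := by
    refine le_trans (le_trans hmarkov hint) ?_
    rw [← ENNReal.ofReal_mul (by norm_num)]
    apply ENNReal.ofReal_le_ofReal
    nlinarith [exp_neg_ten_le, Real.exp_pos (-10)]
  have hε0 : ENNReal.ofReal (0.05 * dVal G lmax c v) ≠ 0 :=
    ne_of_gt (ENNReal.ofReal_pos.mpr (by nlinarith))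
  have hcancel : μ {ω | ENNReal.ofReal (0.05 * dVal G lmax c v) ≤ g ω}
      ≤ ENNReal.ofReal 0.03 := by
    rw [mul_comm] at hchain
    exact (ENNReal.mul_le_mul_iff_left hε0 ENNReal.ofReal_ne_top).mp hchain
  exact le_trans (measure_mono hsub) hcancel

end Aux

/-- if on `H ∈ F_t` round `t > max_w ℓ_max(w)` is not platinum for `v`,
`η_t(v) ≤ 0.0001`, `d_t(v) > 0.01` and `d_t^L(v) < 0.01 d_t(v)`, then with conditional
probability at least `0.97`, `d_{t+1}(v) < 0.6 d_t(v)` or round `t+1` is platinum for `v`. -/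
theorem statement11 :
    ∀ (V : Type) [Fintype V] [DecidableEq V] (G : SimpleGraph V) [DecidableRel G.Adj]
      (lmax : V → ℤ), (∀ v, 1 ≤ lmax v) →
      ∀ (Ω : Type) [MeasurableSpace Ω] (μ : MeasureTheory.Measure Ω)
        [MeasureTheory.IsProbabilityMeasure μ] (U : ℕ → V → Ω → ℝ),
        (∀ t v, Measurable (U t v)) →
        iIndepFun (fun p : ℕ × V => fun ω => U p.1 p.2 ω) μ →
        (∀ t v, μ.map (U t v) = MeasureTheory.volume.restrict (Set.Ico (0 : ℝ) 1)) →
        ∀ (ℓ₁ : V → ℤ), (∀ v, -lmax v ≤ ℓ₁ v ∧ ℓ₁ v ≤ lmax v) →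
        ∀ (v : V) (t : ℕ), (∀ w, lmax w < (t : ℤ)) →
        ∀ H : Set Ω, MeasurableSet[Ft U t] H →
          (∀ ω ∈ H, ¬ Platinum G (level G lmax ℓ₁ U ω t) v ∧
            eta G lmax (level G lmax ℓ₁ U ω t) v ≤ 0.0001 ∧
            0.01 < dVal G lmax (level G lmax ℓ₁ U ω t) v ∧
            dLVal G lmax (level G lmax ℓ₁ U ω t) v <
              0.01 * dVal G lmax (level G lmax ℓ₁ U ω t) v) →
          ENNReal.ofReal 0.97 * μ H ≤
            μ ({ω | dVal G lmax (level G lmax ℓ₁ U ω (t + 1)) v <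
                  0.6 * dVal G lmax (level G lmax ℓ₁ U ω t) v ∨
                Platinum G (level G lmax ℓ₁ U ω (t + 1)) v} ∩ H) := by
  intro V _ _ G _ lmax h1 Ω mΩ μ hprob U hU hIndep hmap ℓ₁ hinit v t ht H hH hHyp
  classical
  have ht0 : t ≠ 0 := by
    intro h; subst h; have := ht v; have := h1 v; omega
  -- Ft is a sub-σ-algebra of the ambient one
  have hFt_le : Ft (V := V) U t ≤ mΩ := by
    intro s hs
    obtain ⟨s', hs', rfl⟩ := MeasurableSpace.measurableSet_comap.mp hs
    exact (measurable_pi_lambda _ fun q : Fin t × V => hU q.1 q.2) hs'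
  set C : Finset (V → ℤ) := Fintype.piFinset (fun w => Finset.Icc (-lmax w) (lmax w)) with hCdef
  have hmemC : ∀ ω : Ω, level G lmax ℓ₁ U ω t ∈ C := by
    intro ω
    rw [hCdef]
    refine Fintype.mem_piFinset.mpr fun w => ?_
    rw [Finset.mem_Icc]
    exact ⟨(level_range G lmax h1 ℓ₁ hinit U ω t w).1,
      (level_range G lmax h1 ℓ₁ hinit U ω t w).2⟩
  set A : Set Ω := {ω | dVal G lmax (level G lmax ℓ₁ U ω (t + 1)) v <
      0.6 * dVal G lmax (level G lmax ℓ₁ U ω t) v ∨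
      Platinum G (level G lmax ℓ₁ U ω (t + 1)) v} with hAdef
  set Hc : (V → ℤ) → Set Ω := fun c => H ∩ {ω | level G lmax ℓ₁ U ω t = c} with hHcdef
  set Bc : (V → ℤ) → Set Ω := fun c => {ω | 0.05 * dVal G lmax c v <
      ∑ u ∈ G.neighborFinset v,
      (if (¬ Light G lmax c u ∧ 0 < muVal G lmax c u) ∧
          (∀ w, G.Adj u w → ¬ U t w ω < beepP lmax c w)
       then 2 * beepP lmax c u else 0)} with hBcdef
  set NullS : Set Ω := ⋃ w : V, {ω | (1:ℝ) ≤ U t w ω} with hNdef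
  set Good : (V → ℤ) → Set Ω := fun c => Hc c \ (Bc c ∪ NullS) with hGdef
  -- measurability facts
  have hlevFt : ∀ w, Measurable[Ft U t] fun ω => level G lmax ℓ₁ U ω t w :=
    fun w => measurable_level_Ft G lmax ℓ₁ U t t le_rfl w
  have hHcFt : ∀ c : V → ℤ, MeasurableSet[Ft U t] (Hc c) := by
    intro c
    refine hH.inter ?_
    have h : {ω | level G lmax ℓ₁ U ω t = c}
        = ⋂ w, (fun ω => level G lmax ℓ₁ U ω t w) ⁻¹' {c w} := by
      ext ω; simp [funext_iff]
    rw [h]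
    exact MeasurableSet.iInter fun w => hlevFt w (measurableSet_singleton _)
  have hHcMeas : ∀ c, MeasurableSet (Hc c) := fun c => hFt_le _ (hHcFt c)
  have hψ : Measurable (fun ω => fun w : V => U t w ω) :=
    measurable_pi_lambda _ fun w => hU t w
  have hDmeas : ∀ c : V → ℤ, MeasurableSet {y : V → ℝ |
      0.05 * dVal G lmax c v < ∑ u ∈ G.neighborFinset v,
        (if (¬ Light G lmax c u ∧ 0 < muVal G lmax c u) ∧
            (∀ w, G.Adj u w → ¬ y w < beepP lmax c w)
         then 2 * beepP lmax c u else 0)} := by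
    intro c
    have hF : Measurable (fun y : V → ℝ => ∑ u ∈ G.neighborFinset v,
        (if (¬ Light G lmax c u ∧ 0 < muVal G lmax c u) ∧
            (∀ w, G.Adj u w → ¬ y w < beepP lmax c w)
         then 2 * beepP lmax c u else 0)) := by
      refine Finset.measurable_sum _ fun u _ => ?_
      by_cases hA : (¬ Light G lmax c u ∧ 0 < muVal G lmax c u)
      · have h : (fun y : V → ℝ => if (¬ Light G lmax c u ∧ 0 < muVal G lmax c u) ∧
              (∀ w, G.Adj u w → ¬ y w < beepP lmax c w) then 2 * beepP lmax c u else 0)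
            = fun y => if (∀ w, G.Adj u w → ¬ y w < beepP lmax c w)
              then 2 * beepP lmax c u else 0 := by
          funext y
          by_cases hB : (∀ w, G.Adj u w → ¬ y w < beepP lmax c w) <;> simp [hA, hB]
        rw [h]
        refine Measurable.ite ?_ measurable_const measurable_const
        have h2 : {y : V → ℝ | ∀ w, G.Adj u w → ¬ y w < beepP lmax c w}
            = ⋂ w, {y : V → ℝ | G.Adj u w → ¬ y w < beepP lmax c w} := by ext; simp
        rw [h2]
        refine MeasurableSet.iInter fun w => ?_
        by_cases ha : G.Adj u w
        · simp only [ha, true_implies, not_lt]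
          exact measurableSet_le measurable_const (measurable_pi_apply w)
        · simp [ha]
      · have h : (fun y : V → ℝ => if (¬ Light G lmax c u ∧ 0 < muVal G lmax c u) ∧
              (∀ w, G.Adj u w → ¬ y w < beepP lmax c w) then 2 * beepP lmax c u else 0)
            = fun _ => 0 := by
          funext y; rw [if_neg (by tauto)]
        rw [h]; exact measurable_const
    exact measurableSet_lt measurable_const hF
  have hBcMeas : ∀ c, MeasurableSet (Bc c) := fun c => hψ (hDmeas c)
  have hNullMeas : MeasurableSet NullS := by
    rw [hNdef]
    exact MeasurableSet.iUnion fun w => (hU t w) measurableSet_Ici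
  have hNull0 : μ NullS = 0 := by
    rw [hNdef]
    refine measure_iUnion_null fun w => ?_
    have h : {ω | (1:ℝ) ≤ U t w ω} = U t w ⁻¹' Set.Ici 1 := rfl
    rw [h, ← Measure.map_apply (hU t w) measurableSet_Ici, hmap t w,
      Measure.restrict_apply measurableSet_Ici]
    have h2 : Set.Ici (1:ℝ) ∩ Set.Ico 0 1 = ∅ := by
      ext x
      simp only [Set.mem_inter_iff, Set.mem_Ici, Set.mem_Ico, Set.mem_empty_iff_false, iff_false,
        not_and]
      intro h1x h0x; linarith
    rw [h2]; simp
  -- independence of Hc c and Bc c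
  have hindep : ∀ c : V → ℤ, μ (Hc c ∩ Bc c) = μ (Hc c) * μ (Bc c) := by
    intro c
    have hST : Disjoint (Finset.range t ×ˢ (Finset.univ : Finset V))
        ({t} ×ˢ (Finset.univ : Finset V)) := by
      rw [Finset.disjoint_left]
      rintro ⟨s, w⟩ hs hT
      rw [Finset.mem_product, Finset.mem_range] at hs
      rw [Finset.mem_product, Finset.mem_singleton] at hT
      omega
    have hIF := hIndep.indepFun_finset (Finset.range t ×ˢ (Finset.univ : Finset V))
      ({t} ×ˢ (Finset.univ : Finset V)) hST (fun q => hU q.1 q.2)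
    obtain ⟨A0, hA0, hA0eq⟩ := MeasurableSpace.measurableSet_comap.mp (hHcFt c)
    have hφ1 : Measurable (fun x : (Finset.range t ×ˢ (Finset.univ : Finset V) : Finset (ℕ × V)) → ℝ
        => fun q : Fin t × V => x ⟨((q.1 : ℕ), q.2),
          Finset.mem_product.mpr ⟨Finset.mem_range.mpr q.1.isLt, Finset.mem_univ _⟩⟩) :=
      measurable_pi_lambda _ fun q => measurable_pi_apply _
    have hφ2 : Measurable (fun x : ({t} ×ˢ (Finset.univ : Finset V) : Finset (ℕ × V)) → ℝ
        => fun w : V => x ⟨(t, w),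
          Finset.mem_product.mpr ⟨Finset.mem_singleton_self t, Finset.mem_univ _⟩⟩) :=
      measurable_pi_lambda _ fun w => measurable_pi_apply _
    have hHceq : Hc c = (fun a (i : (Finset.range t ×ˢ (Finset.univ : Finset V) : Finset (ℕ × V)))
        => U (i : ℕ × V).1 (i : ℕ × V).2 a) ⁻¹'
        ((fun x => fun q : Fin t × V => x ⟨((q.1 : ℕ), q.2),
          Finset.mem_product.mpr ⟨Finset.mem_range.mpr q.1.isLt, Finset.mem_univ _⟩⟩) ⁻¹' A0) := by
      rw [← hA0eq]; rfl
    have hBceq : Bc c = (fun a (i : ({t} ×ˢ (Finset.univ : Finset V) : Finset (ℕ × V)))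
        => U (i : ℕ × V).1 (i : ℕ × V).2 a) ⁻¹'
        ((fun x => fun w : V => x ⟨(t, w),
          Finset.mem_product.mpr ⟨Finset.mem_singleton_self t, Finset.mem_univ _⟩⟩) ⁻¹'
          {y : V → ℝ | 0.05 * dVal G lmax c v < ∑ u ∈ G.neighborFinset v,
            (if (¬ Light G lmax c u ∧ 0 < muVal G lmax c u) ∧
                (∀ w, G.Adj u w → ¬ y w < beepP lmax c w)
             then 2 * beepP lmax c u else 0)}) := rfl
    rw [hHceq, hBceq]
    exact (indepFun_iff_measure_inter_preimage_eq_mul.mp hIF) _ _ (hφ1 hA0) (hφ2 (hDmeas c))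
  -- the per-configuration bound
  have key : ∀ c ∈ C, ENNReal.ofReal 0.97 * μ (Hc c) ≤ μ (Good c) := by
    intro c _
    rcases Set.eq_empty_or_nonempty (Hc c) with hemp | ⟨ω₀, hω₀⟩
    · rw [hemp]; simp
    · have hlev0 : level G lmax ℓ₁ U ω₀ t = c := hω₀.2
      have h4 := hHyp ω₀ hω₀.1
      rw [hlev0] at h4
      obtain ⟨hplat, heta, hd, hdL⟩ := h4
      have hBad : μ (Bc c) ≤ ENNReal.ofReal 0.03 :=
        prob_bad G lmax μ U hU hIndep hmap c t v hd
      have hsplit : μ (Hc c) ≤ μ (Good c) + (μ (Hc c ∩ Bc c) + μ NullS) := by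
        refine le_trans (measure_mono ?_)
          (le_trans (measure_union_le _ _) (add_le_add_right (measure_union_le _ _) _))
        intro ω hω
        by_cases h1' : ω ∈ Bc c ∪ NullS
        · rcases h1' with h | h
          · exact Or.inr (Or.inl ⟨hω, h⟩)
          · exact Or.inr (Or.inr h)
        · exact Or.inl ⟨hω, h1'⟩
      rw [hNull0, add_zero, hindep c] at hsplit
      have hBle : μ (Hc c) * μ (Bc c) ≤ ENNReal.ofReal 0.03 * μ (Hc c) := by
        rw [mul_comm]
        exact mul_le_mul_left hBad _
      have hsum : ENNReal.ofReal 0.97 * μ (Hc c) + ENNReal.ofReal 0.03 * μ (Hc c)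
          = μ (Hc c) := by
        rw [← add_mul, ← ENNReal.ofReal_add (by norm_num) (by norm_num)]
        norm_num
      have hfin : ENNReal.ofReal 0.03 * μ (Hc c) ≠ ⊤ :=
        ENNReal.mul_ne_top ENNReal.ofReal_ne_top (measure_ne_top μ _)
      have hstep : ENNReal.ofReal 0.97 * μ (Hc c) + ENNReal.ofReal 0.03 * μ (Hc c)
          ≤ μ (Good c) + ENNReal.ofReal 0.03 * μ (Hc c) := by
        rw [hsum]
        exact le_trans hsplit (add_le_add_right hBle _)
      exact (ENNReal.add_le_add_iff_right hfin).mp hstep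
  -- Good c is contained in the target event
  have hGoodsub : ∀ c ∈ C, Good c ⊆ A ∩ H := by
    intro c _ ω hω
    obtain ⟨⟨hωH, hωlev⟩, hωn⟩ := hω
    have hnB : ω ∉ Bc c := fun h => hωn (Or.inl h)
    have hnN : ω ∉ NullS := fun h => hωn (Or.inr h)
    refine ⟨?_, hωH⟩
    have hωlev' : level G lmax ℓ₁ U ω t = c := hωlev
    have hstep : level G lmax ℓ₁ U ω (t+1) =
        updateLevel G lmax c (fun w => U t w ω < beepP lmax c w) := by
      have h : level G lmax ℓ₁ U ω (t+1) = if t = 0 then ℓ₁ else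
          updateLevel G lmax (level G lmax ℓ₁ U ω t)
            (fun w => U t w ω < beepP lmax (level G lmax ℓ₁ U ω t) w) := by
        simp [level]
      rw [h, if_neg ht0, hωlev']
    have h4 := hHyp ω hωH
    rw [hωlev'] at h4
    obtain ⟨hplat, heta, hd, hdL⟩ := h4
    have hsure : ∀ w, c w ≤ 0 → (U t w ω < beepP lmax c w) := by
      intro w hw
      have hb1 : beepP lmax c w = 1 := by unfold beepP; rw [if_pos hw]
      rw [hb1]
      by_contra hcon
      refine hnN ?_
      rw [hNdef]
      exact Set.mem_iUnion.mpr ⟨w, by simpa [not_lt] using hcon⟩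
    have hB : ∑ u ∈ G.neighborFinset v,
        (if (¬ Light G lmax c u ∧ 0 < muVal G lmax c u) ∧
            (∀ w, G.Adj u w → ¬ U t w ω < beepP lmax c w)
         then 2 * beepP lmax c u else 0) ≤ 0.05 * dVal G lmax c v := not_lt.mp hnB
    have hrange : ∀ w, c w ≤ lmax w := by
      intro w; rw [← hωlev']
      exact (level_range G lmax h1 ℓ₁ hinit U ω t w).2
    have hdet := det_step G lmax h1 c hrange (fun w => U t w ω < beepP lmax c w) v
      hplat heta hd hdL hsure hB
    show ω ∈ A
    rw [hAdef]
    show dVal G lmax (level G lmax ℓ₁ U ω (t+1)) v <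
        0.6 * dVal G lmax (level G lmax ℓ₁ U ω t) v ∨
        Platinum G (level G lmax ℓ₁ U ω (t+1)) v
    rw [hstep, hωlev']
    exact hdet
  -- disjointness and assembly
  have hdisj : (C : Set (V → ℤ)).PairwiseDisjoint Hc := by
    intro c1 _ c2 _ hne
    refine Set.disjoint_left.mpr ?_
    intro ω h1' h2'
    exact hne (h1'.2.symm.trans h2'.2)
  have hGdisj : (C : Set (V → ℤ)).PairwiseDisjoint Good := by
    intro c1 hc1 c2 hc2 hne
    exact Disjoint.mono Set.diff_subset Set.diff_subset (hdisj hc1 hc2 hne)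
  have hGoodMeas : ∀ c ∈ C, MeasurableSet (Good c) := fun c _ =>
    (hHcMeas c).diff ((hBcMeas c).union hNullMeas)
  have hHun : H = ⋃ c ∈ C, Hc c := by
    ext ω
    simp only [Set.mem_iUnion]
    constructor
    · intro h
      exact ⟨level G lmax ℓ₁ U ω t, hmemC ω, h, rfl⟩
    · rintro ⟨c, _, hω, _⟩
      exact hω
  calc ENNReal.ofReal 0.97 * μ H
      = ∑ c ∈ C, ENNReal.ofReal 0.97 * μ (Hc c) := by
        rw [← Finset.mul_sum]
        congr 1
        rw [show μ H = μ (⋃ c ∈ C, Hc c) from by rw [← hHun]]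
        exact measure_biUnion_finset hdisj (fun c _ => hHcMeas c)
    _ ≤ ∑ c ∈ C, μ (Good c) := Finset.sum_le_sum key
    _ = μ (⋃ c ∈ C, Good c) := (measure_biUnion_finset hGdisj hGoodMeas).symm
    _ ≤ μ (A ∩ H) := measure_mono (Set.iUnion₂_subset hGoodsub)


end BeepMIS
end
end

section
/- For every initial configuration and every realization of the beeps consistent with the algorithm (a vertex beeps in round t whenever ℓ_t(v) ≤ 0 and never beeps when ℓ_t(v) = ℓ_max(v)), for every round t ≥ 1 it holds that I_t ⊆ I_{t+1} and S_t ⊆ S_{t+1}; that is, once a vertex joins the MIS set it remains in it forever, and the set of stable vertices is non-decreasing in t. -/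
open MeasureTheory ProbabilityTheory Real
open scoped ENNReal Classical

noncomputable section

namespace BeepMIS

variable {V : Type} [Fintype V] [DecidableEq V]

lemma muVal_eq_one_iff (G : SimpleGraph V) [DecidableRel G.Adj] (lmax ℓ : V → ℤ)
    (hl : ∀ v, 1 ≤ lmax v) (hb : ∀ v, ℓ v ≤ lmax v) (v : V) :
    muVal G lmax ℓ v = 1 ↔ ∀ u ∈ G.neighborFinset v, ℓ u = lmax u := by
  unfold muVal
  split_ifs with h
  · constructor
    · intro heq u hu
      have hpos : (0 : ℝ) < (lmax u : ℝ) := by exact_mod_cast lt_of_lt_of_le one_pos (hl u)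
      have h1 : (ℓ u : ℝ) / (lmax u : ℝ) ≤ 1 :=
        div_le_one_of_le₀ (by exact_mod_cast hb u) hpos.le
      have h2 : (1 : ℝ) ≤ (ℓ u : ℝ) / (lmax u : ℝ) :=
        heq ▸ Finset.inf'_le (fun u => (ℓ u : ℝ) / (lmax u : ℝ)) hu
      have heq1 : (ℓ u : ℝ) / (lmax u : ℝ) = 1 := le_antisymm h1 h2
      field_simp at heq1
      exact_mod_cast heq1
    · intro hall
      obtain ⟨u0, hu0⟩ := h
      apply le_antisymm
      · have := Finset.inf'_le (fun u => (ℓ u : ℝ) / (lmax u : ℝ)) hu0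
        have hpos : (0 : ℝ) < (lmax u0 : ℝ) := by exact_mod_cast lt_of_lt_of_le one_pos (hl u0)
        rw [hall u0 hu0] at this
        rwa [div_self hpos.ne'] at this
      · apply Finset.le_inf'
        intro u hu
        have hpos : (0 : ℝ) < (lmax u : ℝ) := by exact_mod_cast lt_of_lt_of_le one_pos (hl u)
        rw [hall u hu, div_self hpos.ne']
  · constructor
    · intro _ u hu
      exact absurd ⟨u, hu⟩ h
    · intro _; rfl

/-- for any realization of the beeps consistent with the algorithm,
`I_t ⊆ I_{t+1}` and `S_t ⊆ S_{t+1}` for every round `t ≥ 1`. -/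
theorem statement13 :
    ∀ (V : Type) [Fintype V] [DecidableEq V] (G : SimpleGraph V) [DecidableRel G.Adj]
      (lmax : V → ℤ), (∀ v, 1 ≤ lmax v) →
    ∀ (ℓ : ℕ → V → ℤ) (b : ℕ → V → Prop),
      (∀ v, -lmax v ≤ ℓ 1 v ∧ ℓ 1 v ≤ lmax v) →
      (∀ t, 1 ≤ t → ∀ v, ℓ (t + 1) v = updateLevel G lmax (ℓ t) (b t) v) →
      (∀ t, 1 ≤ t → ∀ v, ℓ t v ≤ 0 → b t v) →
      (∀ t, 1 ≤ t → ∀ v, ℓ t v = lmax v → ¬ b t v) →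
      ∀ (t : ℕ), 1 ≤ t →
        misSet G lmax (ℓ t) ⊆ misSet G lmax (ℓ (t + 1)) ∧
        stableSet G lmax (ℓ t) ⊆ stableSet G lmax (ℓ (t + 1)) := by
  intro V _ _ G _ lmax hlmax ℓ b hinit hupd hbeep hnobeep
  -- levels stay within bounds
  have hbdd : ∀ t, 1 ≤ t → ∀ v, -lmax v ≤ ℓ t v ∧ ℓ t v ≤ lmax v := by
    intro t
    induction t with
    | zero => omega
    | succ t ih =>
      intro _ v
      rcases Nat.lt_or_ge t 1 with h | h
      · have : t + 1 = 1 := by omega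
        rw [this]; exact hinit v
      · rw [hupd t h v]
        have hv := ih h v
        have hlv := hlmax v
        unfold updateLevel
        split_ifs with h1 h2 <;> omega
  -- key: MIS membership is preserved
  have key : ∀ t, 1 ≤ t → ∀ v, v ∈ misSet G lmax (ℓ t) → v ∈ misSet G lmax (ℓ (t + 1)) := by
    intro t ht v hv
    obtain ⟨hv1, hv2⟩ := hv
    have hall : ∀ u ∈ G.neighborFinset v, ℓ t u = lmax u :=
      (muVal_eq_one_iff G lmax (ℓ t) hlmax (fun u => (hbdd t ht u).2) v).mp hv2
    -- v beeps, no neighbor of v beeps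
    have hbv : b t v := hbeep t ht v (by have := hlmax v; omega)
    have hnb : ∀ u, G.Adj v u → ¬ b t u := by
      intro u hu
      exact hnobeep t ht u (hall u ((G.mem_neighborFinset v u).mpr hu))
    -- new level of v
    have hlv : ℓ (t + 1) v = -lmax v := by
      rw [hupd t ht v]
      unfold updateLevel
      rw [if_neg, if_pos hbv]
      rintro ⟨u, hadj, hbu⟩
      exact hnb u hadj hbu
    -- new level of neighbors of v
    have hnbr : ∀ u ∈ G.neighborFinset v, ℓ (t + 1) u = lmax u := by
      intro u hu
      have hadj : G.Adj v u := (G.mem_neighborFinset v u).mp hu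
      rw [hupd t ht u]
      unfold updateLevel
      rw [if_pos ⟨v, hadj.symm, hbv⟩, hall u hu]
      omega
    refine ⟨hlv, ?_⟩
    exact (muVal_eq_one_iff G lmax (ℓ (t + 1)) hlmax
      (fun u => (hbdd (t + 1) (by omega) u).2) v).mpr hnbr
  intro t ht
  refine ⟨key t ht, ?_⟩
  rintro w (hw | ⟨u, hu, hadj⟩)
  · exact Or.inl (key t ht w hw)
  · exact Or.inr ⟨u, key t ht u hu, hadj⟩

end BeepMIS
end
end
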